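/- Let G be the generalized planar Hilbert curve with parameters α > 1/2 and ρ < 1/4, and let h : [0,1] → ℝ^2 satisfy |h(t+s) − h(t)| ≤ C√(s log(1/s)) for all sufficiently small s > 0 and 0 ≤ t ≤ 1 − s. Then the range of G + h contains a nonempty open subset of ℝ^2. -/

import Mathlib

open Set

/-- Given the values `v0 = h(0)` and `v1 = h(1)`, the unique traversal-order function
(as in Definition 2.1) with these values: `h(2) = -h(0)`, `h(3) = -h(1)`. -/
def hilbertOrder (v0 v1 : ℝ × ℝ) : Fin 4 → ℝ × ℝ := ![v0, v1, -v0, -v1]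

/-- The traversal functions `f_{a_1 … a_n}` of the standard Hilbert algorithm, recursing
on the string read backwards (head = last digit `a_n`). -/
def travRev : List (Fin 4) → Fin 4 → ℝ × ℝ
  | [] => hilbertOrder (-1, -1) (-1, 1)
  | a :: w =>
    let f := travRev w
    if a = 0 then hilbertOrder (f 0) (f 3)
    else if a = 3 then hilbertOrder (f 2) (f 1)
    else f

/-- The traversal function `f_{a_1 … a_n}` associated to the string `a_1 … a_n`. -/
def trav (w : List (Fin 4)) : Fin 4 → ℝ × ℝ := travRev w.reverse

/-- The limit value `G(t)` of the generalized Hilbert curve at the point of the Cantor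
set with digit sequence `a`. -/
noncomputable def GHlim (α : ℝ) (a : ℕ → Fin 4) : ℝ × ℝ :=
  (1 / 2, 1 / 2) + ∑' k : ℕ, (α ^ k / 4) • trav (List.ofFn fun i : Fin k => a i) (a k)

/-- The point of the Cantor set `C_ρ` with digit sequence `a`. -/
noncomputable def cantorPt (ρ : ℝ) (a : ℕ → Fin 4) : ℝ :=
  ((1 - ρ) / (3 * ρ)) * ∑' n : ℕ, (a n : ℝ) * ρ ^ (n + 1)

@[simp] lemma hilbertOrder_zero (v0 v1 : ℝ × ℝ) : hilbertOrder v0 v1 0 = v0 := rfl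
@[simp] lemma hilbertOrder_one (v0 v1 : ℝ × ℝ) : hilbertOrder v0 v1 1 = v1 := rfl
@[simp] lemma hilbertOrder_two (v0 v1 : ℝ × ℝ) : hilbertOrder v0 v1 2 = -v0 := rfl
@[simp] lemma hilbertOrder_three (v0 v1 : ℝ × ℝ) : hilbertOrder v0 v1 3 = -v1 := rfl

/-- State invariant of the Hilbert traversal functions. -/
def Qstate (f : Fin 4 → ℝ × ℝ) : Prop :=
  ∃ u v : ℝ × ℝ, f = hilbertOrder u v ∧
    (u = ((-1:ℝ), (-1:ℝ)) ∨ u = (1, 1)) ∧ (v = ((-1:ℝ), (1:ℝ)) ∨ v = (1, -1))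

lemma qstate_travRev (w : List (Fin 4)) : Qstate (travRev w) := by
  induction w with
  | nil => exact ⟨_, _, rfl, Or.inl rfl, Or.inl rfl⟩
  | cons a w ih =>
    obtain ⟨u, v, hf, hu, hv⟩ := ih
    by_cases h0 : a = 0
    · refine ⟨u, -v, ?_, hu, ?_⟩
      · simp [travRev, h0, hf, hilbertOrder]
      · rcases hv with hv | hv <;> simp [hv, Prod.ext_iff] <;> norm_num
    · by_cases h3 : a = 3
      · refine ⟨-u, v, ?_, ?_, hv⟩
        · simp [travRev, h0, h3, hf, hilbertOrder]
        · rcases hu with hu | hu <;> simp [hu, Prod.ext_iff] <;> norm_num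
      · exact ⟨u, v, by simp [travRev, h0, h3, hf], hu, hv⟩

lemma corner_avail (w : List (Fin 4)) (e1 e2 : ℝ)
    (h1 : e1 = 1 ∨ e1 = -1) (h2 : e2 = 1 ∨ e2 = -1) :
    ∃ a : Fin 4, travRev w a = (e1, e2) := by
  obtain ⟨u, v, hf, hu, hv⟩ := qstate_travRev w
  rcases h1 with h1 | h1 <;> rcases h2 with h2 | h2 <;> subst h1 h2 <;>
    rcases hu with hu | hu <;> rcases hv with hv | hv <;>
    first
      | (refine ⟨0, ?_⟩; rw [hf]; simp [hu, hv, Prod.ext_iff]; done)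
      | (refine ⟨1, ?_⟩; rw [hf]; simp [hu, hv, Prod.ext_iff]; done)
      | (refine ⟨2, ?_⟩; rw [hf]; simp [hu, hv, Prod.ext_iff]; done)
      | (refine ⟨3, ?_⟩; rw [hf]; simp [hu, hv, Prod.ext_iff]; done)

lemma norm_travRev_le (w : List (Fin 4)) (a : Fin 4) : ‖travRev w a‖ ≤ 1 := by
  obtain ⟨u, v, hf, hu, hv⟩ := qstate_travRev w
  have hcu : ‖u‖ ≤ 1 := by rcases hu with hu | hu <;> simp [hu, Prod.norm_def] <;> norm_num
  have hcv : ‖v‖ ≤ 1 := by rcases hv with hv | hv <;> simp [hv, Prod.norm_def] <;> norm_num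
  fin_cases a <;> simp [hf, hilbertOrder] <;> simpa using ‹_›

noncomputable def sgn (y : ℝ) : ℝ := if 0 ≤ y then 1 else -1

lemma sgn_mem (y : ℝ) : sgn y = 1 ∨ sgn y = -1 := by
  unfold sgn; split <;> simp

lemma abs_sub_sgn (y b : ℝ) (hb : 0 < b) (hy : |y| ≤ 2 * b) : |y - b * sgn y| ≤ b := by
  unfold sgn; rcases abs_le.1 hy with ⟨h1, h2⟩
  split <;> rename_i hs <;> rw [abs_le] <;> constructor <;> nlinarith

noncomputable def xval (α : ℝ) : List (Fin 4) → ℝ × ℝ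
  | [] => (1/2, 1/2)
  | a :: w => xval α w + (α ^ w.length / 4) • travRev w a

def extSeq (w : List (Fin 4)) : ℕ → Fin 4 := fun n => w.reverse.getD n 0

noncomputable def tauL (ρ : ℝ) (w : List (Fin 4)) : ℝ := cantorPt ρ (extSeq w)

noncomputable def resid (α ρ : ℝ) (h : ℝ → ℝ × ℝ) (p : ℝ × ℝ) (w : List (Fin 4)) : ℝ × ℝ :=
  p - h (tauL ρ w) - xval α w

noncomputable def choiceD (α ρ : ℝ) (h : ℝ → ℝ × ℝ) (p : ℝ × ℝ) (N : ℕ)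
    (w : List (Fin 4)) : Fin 4 :=
  if w.length < N then 0
  else (corner_avail w (sgn (resid α ρ h p w).1) (sgn (resid α ρ h p w).2)
    (sgn_mem _) (sgn_mem _)).choose

noncomputable def digitsD (α ρ : ℝ) (h : ℝ → ℝ × ℝ) (p : ℝ × ℝ) (N : ℕ) : ℕ → List (Fin 4)
  | 0 => []
  | k+1 => choiceD α ρ h p N (digitsD α ρ h p N k) :: digitsD α ρ h p N k

noncomputable def aD (α ρ : ℝ) (h : ℝ → ℝ × ℝ) (p : ℝ × ℝ) (N : ℕ) (n : ℕ) : Fin 4 :=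
  choiceD α ρ h p N (digitsD α ρ h p N n)

section Construction

variable (α ρ : ℝ) (h : ℝ → ℝ × ℝ) (p : ℝ × ℝ) (N : ℕ)

lemma digitsD_succ (k : ℕ) :
    digitsD α ρ h p N (k+1) = aD α ρ h p N k :: digitsD α ρ h p N k := rfl

lemma length_digitsD (k : ℕ) : (digitsD α ρ h p N k).length = k := by
  induction k with
  | zero => rfl
  | succ k ih => simp [digitsD_succ, ih]

lemma reverse_digitsD (k : ℕ) :
    (digitsD α ρ h p N k).reverse = List.ofFn (fun i : Fin k => aD α ρ h p N i) := by
  induction k with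
  | zero => rfl
  | succ k ih =>
    rw [digitsD_succ, List.reverse_cons, ih,
        List.ofFn_succ' (fun i : Fin (k+1) => aD α ρ h p N i), List.concat_eq_append]
    simp [Fin.coe_castSucc, Fin.val_last]

lemma choice_spec (k : ℕ) (hk : N ≤ k) :
    travRev (digitsD α ρ h p N k) (aD α ρ h p N k) =
      (sgn (resid α ρ h p (digitsD α ρ h p N k)).1,
       sgn (resid α ρ h p (digitsD α ρ h p N k)).2) := by
  have hlen : ¬ (digitsD α ρ h p N k).length < N := by
    rw [length_digitsD]; omega
  unfold aD choiceD
  rw [if_neg hlen]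
  exact (corner_avail _ _ _ (sgn_mem _) (sgn_mem _)).choose_spec

lemma digitsD_replicate (k : ℕ) (hk : k ≤ N) :
    digitsD α ρ h p N k = List.replicate k 0 := by
  induction k with
  | zero => rfl
  | succ k ih =>
    have hk' : k ≤ N := by omega
    have hlen : (digitsD α ρ h p N k).length < N := by rw [length_digitsD]; omega
    rw [digitsD_succ, ih hk', List.replicate_succ]
    congr 1
    unfold aD choiceD
    rw [ih hk', if_pos]
    · rw [← ih hk']; exact hlen

lemma extSeq_lt (k : ℕ) (n : ℕ) (hn : n < k) :
    extSeq (digitsD α ρ h p N k) n = aD α ρ h p N n := by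
  unfold extSeq
  rw [reverse_digitsD]
  rw [List.getD_eq_getElem _ _ (by simpa using hn)]
  simp

lemma extSeq_ge (w : List (Fin 4)) (n : ℕ) (hn : w.length ≤ n) :
    extSeq w n = 0 := by
  unfold extSeq
  rw [List.getD_eq_default]
  simpa using hn

end Construction

section Cantor

variable {ρ : ℝ}

lemma fin4_cast_le (d : Fin 4) : (d : ℝ) ≤ 3 := by
  have := Fin.is_le d; exact_mod_cast Nat.cast_le.2 this

lemma summable_cantor (hρ0 : 0 < ρ) (hρ1 : ρ < 1) (a : ℕ → Fin 4) :
    Summable (fun n : ℕ => (a n : ℝ) * ρ ^ (n + 1)) := by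
  refine Summable.of_nonneg_of_le (fun n => by positivity) (fun n => ?_)
    ((summable_geometric_of_lt_one hρ0.le hρ1).mul_left (3 * ρ))
  have h1 : (a n : ℝ) ≤ 3 := fin4_cast_le _
  have h2 : (0:ℝ) ≤ ρ ^ (n+1) := by positivity
  calc (a n : ℝ) * ρ ^ (n+1) ≤ 3 * ρ ^ (n+1) := mul_le_mul_of_nonneg_right h1 h2
  _ = 3 * ρ * ρ ^ n := by ring

/-- Tail sum bound: `∑_{n ≥ k} a_n ρ^{n+1} ≤ 3 ρ^{k+1}/(1-ρ)`. -/
lemma cantor_tail_bound (hρ0 : 0 < ρ) (hρ1 : ρ < 1) (a : ℕ → Fin 4) (k : ℕ) :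
    (∑' n : ℕ, (a (n + k) : ℝ) * ρ ^ (n + k + 1)) ≤ 3 * ρ ^ (k+1) / (1 - ρ) := by
  have hsum : Summable (fun n : ℕ => (a (n + k) : ℝ) * ρ ^ (n + k + 1)) := by
    have := (summable_cantor hρ0 hρ1 a)
    exact (summable_nat_add_iff k).2 this |>.congr (fun n => rfl) |>.congr (fun n => rfl)
  have hg : Summable (fun n : ℕ => (3 * ρ ^ (k+1)) * ρ ^ n) :=
    (summable_geometric_of_lt_one hρ0.le hρ1).mul_left _
  have hle : ∀ n : ℕ, (a (n + k) : ℝ) * ρ ^ (n + k + 1) ≤ (3 * ρ ^ (k+1)) * ρ ^ n := by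
    intro n
    have h1 : (a (n+k) : ℝ) ≤ 3 := fin4_cast_le _
    have h2 : (0:ℝ) ≤ ρ ^ (n + k + 1) := by positivity
    calc (a (n+k) : ℝ) * ρ ^ (n + k + 1) ≤ 3 * ρ ^ (n + k + 1) :=
          mul_le_mul_of_nonneg_right h1 h2
    _ = 3 * ρ ^ (k+1) * ρ ^ n := by ring
  calc (∑' n : ℕ, (a (n + k) : ℝ) * ρ ^ (n + k + 1))
      ≤ ∑' n : ℕ, (3 * ρ ^ (k+1)) * ρ ^ n := Summable.tsum_le_tsum hle hsum hg
    _ = (3 * ρ ^ (k+1)) * (1 - ρ)⁻¹ := by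
        rw [tsum_mul_left, tsum_geometric_of_lt_one hρ0.le hρ1]
    _ = 3 * ρ ^ (k+1) / (1 - ρ) := by ring

lemma cantor_tail_nonneg (hρ0 : 0 < ρ) (hρ1 : ρ < 1) (a : ℕ → Fin 4) (k : ℕ) :
    0 ≤ ∑' n : ℕ, (a (n + k) : ℝ) * ρ ^ (n + k + 1) :=
  tsum_nonneg (fun n => by positivity)

lemma cantorPt_nonneg (hρ0 : 0 < ρ) (hρ1 : ρ < 1) (a : ℕ → Fin 4) :
    0 ≤ cantorPt ρ a := by
  unfold cantorPt
  have h1 : (0:ℝ) ≤ (1 - ρ) / (3 * ρ) := by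
    apply div_nonneg <;> nlinarith
  exact mul_nonneg h1 (tsum_nonneg (fun n => by positivity))

lemma cantorPt_le_one (hρ0 : 0 < ρ) (hρ1 : ρ < 1) (a : ℕ → Fin 4) :
    cantorPt ρ a ≤ 1 := by
  unfold cantorPt
  have h0 := cantor_tail_bound hρ0 hρ1 a 0
  simp only [Nat.add_zero, pow_one] at h0
  have h1 : (0:ℝ) ≤ (1 - ρ) / (3 * ρ) := by apply div_nonneg <;> nlinarith
  calc ((1 - ρ) / (3 * ρ)) * ∑' n : ℕ, (a n : ℝ) * ρ ^ (n + 1)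
      ≤ ((1 - ρ) / (3 * ρ)) * (3 * ρ ^ (0+1) / (1 - ρ)) := by
        apply mul_le_mul_of_nonneg_left _ h1
        simpa using h0
    _ = 1 := by
        have hne : (1:ℝ) - ρ ≠ 0 := by linarith
        have hne2 : (3:ℝ) * ρ ≠ 0 := by positivity
        field_simp
        ring
end Cantor

section TauL

variable {α ρ : ℝ} (h : ℝ → ℝ × ℝ) (p : ℝ × ℝ) (N : ℕ)

lemma tauL_eq_sum (hρ0 : 0 < ρ) (hρ1 : ρ < 1) (w : List (Fin 4)) :
    tauL ρ w = ((1 - ρ) / (3 * ρ)) *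
      ∑ n ∈ Finset.range w.length, (extSeq w n : ℝ) * ρ ^ (n + 1) := by
  unfold tauL cantorPt
  congr 1
  apply tsum_eq_sum
  intro n hn
  rw [extSeq_ge w n (by simpa using hn)]
  simp

lemma extSeq_cons_lt (a : Fin 4) (w : List (Fin 4)) (n : ℕ) (hn : n < w.length) :
    extSeq (a :: w) n = extSeq w n := by
  unfold extSeq
  rw [List.reverse_cons, List.getD_append _ _ _ _ (by simpa using hn)]

lemma extSeq_cons_last (a : Fin 4) (w : List (Fin 4)) :
    extSeq (a :: w) w.length = a := by
  unfold extSeq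
  rw [List.reverse_cons, List.getD_append_right _ _ _ _ (by simp)]
  simp

lemma tauL_cons (hρ0 : 0 < ρ) (hρ1 : ρ < 1) (a : Fin 4) (w : List (Fin 4)) :
    tauL ρ (a :: w) = tauL ρ w + ((1 - ρ) / (3 * ρ)) * ((a : ℝ) * ρ ^ (w.length + 1)) := by
  rw [tauL_eq_sum hρ0 hρ1, tauL_eq_sum hρ0 hρ1]
  have hlen : (a :: w).length = w.length + 1 := rfl
  rw [hlen, Finset.sum_range_succ, extSeq_cons_last]
  rw [Finset.sum_congr rfl (fun n hn => by
    rw [extSeq_cons_lt a w n (Finset.mem_range.1 hn)])]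
  ring

lemma tauL_cons_diff_nonneg (hρ0 : 0 < ρ) (hρ1 : ρ < 1) (a : Fin 4) (w : List (Fin 4)) :
    0 ≤ ((1 - ρ) / (3 * ρ)) * ((a : ℝ) * ρ ^ (w.length + 1)) := by
  have h1 : (0:ℝ) ≤ (1 - ρ) / (3 * ρ) := by apply div_nonneg <;> nlinarith
  positivity

lemma coeff_mul_le (hρ0 : 0 < ρ) (hρ1 : ρ < 1) (d : Fin 4) (k : ℕ) :
    ((1 - ρ) / (3 * ρ)) * ((d : ℝ) * ρ ^ (k + 1)) ≤ ρ ^ k := by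
  have h1 : (0:ℝ) ≤ (1 - ρ) / (3 * ρ) := by apply div_nonneg <;> nlinarith
  have h2 : (d : ℝ) * ρ ^ (k+1) ≤ 3 * ρ ^ (k+1) :=
    mul_le_mul_of_nonneg_right (fin4_cast_le d) (by positivity)
  calc ((1 - ρ) / (3 * ρ)) * ((d : ℝ) * ρ ^ (k + 1))
      ≤ ((1 - ρ) / (3 * ρ)) * (3 * ρ ^ (k+1)) := mul_le_mul_of_nonneg_left h2 h1
    _ = (1 - ρ) * ρ ^ k := by
        field_simp
        ring
    _ ≤ ρ ^ k := by nlinarith [pow_nonneg hρ0.le k]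

lemma tauL_mem (hρ0 : 0 < ρ) (hρ1 : ρ < 1) (w : List (Fin 4)) :
    tauL ρ w ∈ Icc (0:ℝ) 1 :=
  ⟨cantorPt_nonneg hρ0 hρ1 _, cantorPt_le_one hρ0 hρ1 _⟩

/-- `0 ≤ cantorPt ρ a - tauL ρ (digitsD … k) ≤ ρ ^ k`. -/
lemma cantor_sub_tau (hρ0 : 0 < ρ) (hρ1 : ρ < 1) (α' : ℝ) (k : ℕ) :
    0 ≤ cantorPt ρ (aD α' ρ h p N) - tauL ρ (digitsD α' ρ h p N k) ∧
      cantorPt ρ (aD α' ρ h p N) - tauL ρ (digitsD α' ρ h p N k) ≤ ρ ^ k := by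
  set a : ℕ → Fin 4 := aD α' ρ h p N with ha
  have hsum := summable_cantor hρ0 hρ1 a
  have hsplit := (Summable.sum_add_tsum_nat_add (f := fun n => (a n : ℝ) * ρ ^ (n + 1)) k hsum).symm
  have htau : tauL ρ (digitsD α' ρ h p N k) = ((1 - ρ) / (3 * ρ)) *
      ∑ n ∈ Finset.range k, (a n : ℝ) * ρ ^ (n + 1) := by
    rw [tauL_eq_sum hρ0 hρ1, length_digitsD]
    congr 1
    refine Finset.sum_congr rfl (fun n hn => ?_)
    rw [extSeq_lt α' ρ h p N k n (Finset.mem_range.1 hn)]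
  have hcoeff : (0:ℝ) ≤ (1 - ρ) / (3 * ρ) := by apply div_nonneg <;> nlinarith
  have hdiff : cantorPt ρ a - tauL ρ (digitsD α' ρ h p N k) =
      ((1 - ρ) / (3 * ρ)) * ∑' n : ℕ, (a (n + k) : ℝ) * ρ ^ (n + k + 1) := by
    rw [htau]
    unfold cantorPt
    rw [hsplit]
    ring
  constructor
  · rw [hdiff]
    exact mul_nonneg hcoeff (cantor_tail_nonneg hρ0 hρ1 a k)
  · rw [hdiff]
    calc ((1 - ρ) / (3 * ρ)) * ∑' n : ℕ, (a (n + k) : ℝ) * ρ ^ (n + k + 1)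
        ≤ ((1 - ρ) / (3 * ρ)) * (3 * ρ ^ (k+1) / (1 - ρ)) :=
          mul_le_mul_of_nonneg_left (cantor_tail_bound hρ0 hρ1 a k) hcoeff
      _ = ρ ^ k := by
          have hne : (1:ℝ) - ρ ≠ 0 := by linarith
          have hne2 : (3:ℝ) * ρ ≠ 0 := by positivity
          field_simp
          ring

end TauL

section PartialSum

variable (α ρ : ℝ) (h : ℝ → ℝ × ℝ) (p : ℝ × ℝ) (N : ℕ)

lemma trav_ofFn_eq (k : ℕ) :
    trav (List.ofFn fun i : Fin k => aD α ρ h p N i) = travRev (digitsD α ρ h p N k) := by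
  unfold trav
  rw [← reverse_digitsD, List.reverse_reverse]

lemma xval_partial_sum (k : ℕ) :
    xval α (digitsD α ρ h p N k) = (1/2, 1/2) + ∑ j ∈ Finset.range k,
      (α ^ j / 4) • trav (List.ofFn fun i : Fin j => aD α ρ h p N i) (aD α ρ h p N j) := by
  induction k with
  | zero => simp [digitsD, xval]
  | succ k ih =>
    rw [Finset.sum_range_succ, digitsD_succ]
    show xval α _ + _ = _
    rw [length_digitsD, ih, trav_ofFn_eq]
    abel

lemma summable_T (hα0 : 0 < α) (hα1 : α < 1) (a : ℕ → Fin 4) :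
    Summable (fun k : ℕ => (α ^ k / 4) • trav (List.ofFn fun i : Fin k => a i) (a k)) := by
  apply Summable.of_norm_bounded (g := fun k => (1/4 : ℝ) * α ^ k)
    ((summable_geometric_of_lt_one hα0.le hα1).mul_left _)
  intro k
  rw [norm_smul]
  have h1 : ‖trav (List.ofFn fun i : Fin k => a i) (a k)‖ ≤ 1 := norm_travRev_le _ _
  have h2 : ‖α ^ k / 4‖ = α ^ k / 4 := by
    rw [Real.norm_eq_abs, abs_of_nonneg (by positivity)]
  rw [h2]
  calc α ^ k / 4 * ‖_‖ ≤ α ^ k / 4 * 1 := by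
        apply mul_le_mul_of_nonneg_left h1 (by positivity)
    _ = 1/4 * α ^ k := by ring

lemma xval_tendsto (hα0 : 0 < α) (hα1 : α < 1) :
    Filter.Tendsto (fun k => xval α (digitsD α ρ h p N k)) Filter.atTop
      (nhds (GHlim α (aD α ρ h p N))) := by
  have hs := (summable_T α hα0 hα1 (aD α ρ h p N)).hasSum.tendsto_sum_nat
  have := hs.const_add ((1/2 : ℝ), (1/2 : ℝ))
  unfold GHlim
  refine Filter.Tendsto.congr (fun k => ?_) this
  rw [← xval_partial_sum]

end PartialSum

section Modulus

/-- `s log(1/s) ≤ ρ^k (k log(1/ρ) + 1)` for `0 < s ≤ ρ^k`. -/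
lemma slog_bound {ρ : ℝ} (hρ0 : 0 < ρ) (hρ1 : ρ < 1) (k : ℕ) (s : ℝ)
    (hs0 : 0 < s) (hsk : s ≤ ρ ^ k) :
    s * Real.log (1 / s) ≤ ρ ^ k * (k * Real.log (1/ρ) + 1) := by
  have hρk : (0:ℝ) < ρ ^ k := by positivity
  have hL : 0 ≤ Real.log (1/ρ) := by
    apply Real.log_nonneg
    rw [le_div_iff₀ hρ0]; linarith
  have hlog : Real.log (1 / s) = k * Real.log (1/ρ) + Real.log (ρ ^ k / s) := by
    rw [Real.log_div one_ne_zero (ne_of_gt hs0), Real.log_div (ne_of_gt hρk) (ne_of_gt hs0),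
        Real.log_pow, Real.log_div one_ne_zero (ne_of_gt hρ0)]
    simp [Real.log_one]
    push_cast
    ring
  rw [hlog, mul_add]
  have h1 : s * (k * Real.log (1/ρ)) ≤ ρ ^ k * (k * Real.log (1/ρ)) := by
    apply mul_le_mul_of_nonneg_right hsk
    positivity
  have h2 : s * Real.log (ρ ^ k / s) ≤ ρ ^ k := by
    have := Real.log_le_sub_one_of_pos (show (0:ℝ) < ρ ^ k / s by positivity)
    calc s * Real.log (ρ ^ k / s) ≤ s * (ρ ^ k / s - 1) :=
          mul_le_mul_of_nonneg_left this hs0.le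
      _ = ρ ^ k - s := by field_simp
      _ ≤ ρ ^ k := by linarith
  calc s * (↑k * Real.log (1 / ρ)) + s * Real.log (ρ ^ k / s)
      ≤ ρ ^ k * (k * Real.log (1/ρ)) + ρ ^ k := by linarith
    _ = ρ ^ k * (↑k * Real.log (1 / ρ) + 1) := by ring

end Modulus

lemma sqrt_pow_eq (x : ℝ) (hx : 0 ≤ x) (k : ℕ) :
    Real.sqrt (x ^ k) = (Real.sqrt x) ^ k := by
  induction k with
  | zero => simp
  | succ k ih => rw [pow_succ, pow_succ, Real.sqrt_mul (by positivity), ih]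


/-- If `G` is the generalized planar Hilbert curve with `α > 1/2`, `ρ < 1/4`, and `h`
satisfies `|h(t+s) - h(t)| ≤ C√(s log(1/s))` for all sufficiently small `s > 0` and
`0 ≤ t ≤ 1 - s`, then the range of `G + h` contains a nonempty open set. -/
theorem stmt15 (α ρ : ℝ) (hα1 : 1 / 2 < α) (hα2 : α < 1) (hρ0 : 0 < ρ)
    (hρ1 : ρ < 1 / 4)
    (G : ℝ → ℝ × ℝ) (hGcont : ContinuousOn G (Icc 0 1))
    (hGval : ∀ a : ℕ → Fin 4, G (cantorPt ρ a) = GHlim α a)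
    (hGlin : ∀ s t : ℝ, 0 ≤ s → s < t → t ≤ 1 →
      Ioo s t ∩ Set.range (cantorPt ρ) = ∅ →
      ∀ u ∈ Icc s t, G u = G s + ((u - s) / (t - s)) • (G t - G s))
    (h : ℝ → ℝ × ℝ) (C : ℝ) (s0 : ℝ) (hs0 : 0 < s0)
    (hmod : ∀ s : ℝ, 0 < s → s ≤ s0 → ∀ t : ℝ, 0 ≤ t → t ≤ 1 - s →
      ‖h (t + s) - h t‖ ≤ C * Real.sqrt (s * Real.log (1 / s))) :
    ∃ U : Set (ℝ × ℝ), IsOpen U ∧ U.Nonempty ∧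
      U ⊆ (fun t => G t + h t) '' Icc (0:ℝ) 1 := by
  have hα0 : (0:ℝ) < α := by linarith
  have hρ1' : ρ < 1 := by linarith
  set β : ℝ := (2*α - 1)/4 with hβdef
  have hβ : 0 < β := by rw [hβdef]; linarith
  set Cp : ℝ := max C 0 with hCpdef
  have hCp0 : 0 ≤ Cp := le_max_right _ _
  set L : ℝ := Real.log (1/ρ) with hLdef
  have hL0 : 0 ≤ L := Real.log_nonneg (by rw [le_div_iff₀ hρ0]; linarith)
  set D : ℝ := Cp * Real.sqrt (L+1) with hDdef
  have hD0 : 0 ≤ D := mul_nonneg hCp0 (Real.sqrt_nonneg _)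
  set r : ℝ := Real.sqrt ρ / α with hrdef
  have hr0 : 0 ≤ r := div_nonneg (Real.sqrt_nonneg _) hα0.le
  have hrlt : r < 1 := by
    rw [hrdef, div_lt_one hα0]
    have h1 : Real.sqrt ρ < 1/2 :=
      (Real.sqrt_lt' (by norm_num : (0:ℝ) < 1/2)).2 (by nlinarith)
    linarith
  -- eventual bounds
  have t1 : Filter.Tendsto (fun k : ℕ => (k:ℝ)^1 * r^k) Filter.atTop (nhds 0) :=
    (summable_pow_mul_geometric_of_norm_lt_one (R := ℝ) 1
      (by rwa [Real.norm_eq_abs, abs_of_nonneg hr0])).tendsto_atTop_zero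
  have t2 : Filter.Tendsto (fun k : ℕ => r^k) Filter.atTop (nhds 0) :=
    tendsto_pow_atTop_nhds_zero_of_lt_one hr0 hrlt
  have hev1 : Filter.Tendsto (fun k : ℕ => D*((k:ℝ)+1)*r^k) Filter.atTop (nhds 0) := by
    have t3 := (t1.add t2).const_mul D
    simp only [add_zero, mul_zero] at t3
    exact t3.congr (fun k => by ring)
  have hev2 : Filter.Tendsto (fun k : ℕ => ρ^k) Filter.atTop (nhds 0) :=
    tendsto_pow_atTop_nhds_zero_of_lt_one hρ0.le hρ1'
  have e1 : ∀ᶠ k : ℕ in Filter.atTop, D*((k:ℝ)+1)*r^k ≤ β :=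
    (hev1.eventually (eventually_le_nhds hβ))
  have e2 : ∀ᶠ k : ℕ in Filter.atTop, ρ^k ≤ s0 :=
    (hev2.eventually (eventually_le_nhds hs0))
  obtain ⟨N, hN⟩ := Filter.eventually_atTop.1 (e1.and e2)
  -- key modulus bound at scale k
  have keyE : ∀ k, N ≤ k → ∀ s : ℝ, 0 ≤ s → s ≤ ρ^k → ∀ t : ℝ, 0 ≤ t → t + s ≤ 1 →
      ‖h (t+s) - h t‖ ≤ β * α^k := by
    intro k hk s hs hsk t ht hts
    rcases eq_or_lt_of_le hs with hs0' | hs0'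
    · rw [← hs0']
      simp only [add_zero, sub_self, norm_zero]
      positivity
    · have hsmall : s ≤ s0 := le_trans hsk (hN k hk).2
      have hb := hmod s hs0' hsmall t ht (by linarith)
      have hslog := slog_bound hρ0 hρ1' k s hs0' hsk
      have step2 : Real.sqrt (s*Real.log (1/s)) ≤ Real.sqrt (ρ^k*((k:ℝ)*L+1)) :=
        Real.sqrt_le_sqrt hslog
      have step3 : Real.sqrt (ρ^k*((k:ℝ)*L+1)) = Real.sqrt ρ ^ k * Real.sqrt ((k:ℝ)*L+1) := by
        rw [Real.sqrt_mul (by positivity), sqrt_pow_eq ρ hρ0.le]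
      have step4 : Real.sqrt ((k:ℝ)*L+1) ≤ ((k:ℝ)+1) * Real.sqrt (L+1) := by
        have h2 : Real.sqrt (L+1)^2 = L+1 := Real.sq_sqrt (by linarith)
        have hk0 : (0:ℝ) ≤ (k:ℝ) := Nat.cast_nonneg k
        have hexp : (((k:ℝ)+1)*Real.sqrt (L+1))^2 = ((k:ℝ)+1)^2*(L+1) := by
          rw [mul_pow, h2]
        have hsq : (k:ℝ)*L+1 ≤ (((k:ℝ)+1)*Real.sqrt (L+1))^2 := by
          rw [hexp]
          nlinarith [mul_nonneg hk0 hL0, mul_nonneg (mul_nonneg hk0 hk0) hL0]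
        calc Real.sqrt ((k:ℝ)*L+1) ≤ Real.sqrt ((((k:ℝ)+1)*Real.sqrt (L+1))^2) :=
              Real.sqrt_le_sqrt hsq
          _ = ((k:ℝ)+1)*Real.sqrt (L+1) := Real.sqrt_sq (by positivity)
      have step5 : Real.sqrt ρ ^ k = r^k * α^k := by
        rw [hrdef, div_pow]
        field_simp
      calc ‖h (t+s) - h t‖ ≤ C * Real.sqrt (s*Real.log (1/s)) := hb
        _ ≤ Cp * Real.sqrt (s*Real.log (1/s)) :=
            mul_le_mul_of_nonneg_right (le_max_left _ _) (Real.sqrt_nonneg _)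
        _ ≤ Cp * Real.sqrt (ρ^k*((k:ℝ)*L+1)) := mul_le_mul_of_nonneg_left step2 hCp0
        _ = Cp * (Real.sqrt ρ ^ k * Real.sqrt ((k:ℝ)*L+1)) := by rw [step3]
        _ ≤ Cp * (Real.sqrt ρ ^ k * (((k:ℝ)+1)*Real.sqrt (L+1))) := by
            refine mul_le_mul_of_nonneg_left ?_ hCp0
            exact mul_le_mul_of_nonneg_left step4 (by positivity)
        _ = (D * ((k:ℝ)+1) * r^k) * α^k := by rw [hDdef, step5]; ring
        _ ≤ β * α^k := mul_le_mul_of_nonneg_right (hN k hk).1 (by positivity)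
  -- the open set
  set w0 : List (Fin 4) := List.replicate N 0 with hw0def
  set c0 : ℝ×ℝ := xval α w0 + h (tauL ρ w0) with hc0def
  refine ⟨Metric.ball c0 (α^N/2), Metric.isOpen_ball,
    ⟨c0, Metric.mem_ball_self (by positivity)⟩, ?_⟩
  intro p hp
  have hdN : digitsD α ρ h p N N = w0 := digitsD_replicate α ρ h p N N le_rfl
  have hYbase : ‖resid α ρ h p (digitsD α ρ h p N N)‖ ≤ α^N/2 := by
    rw [hdN]
    have hres : resid α ρ h p w0 = p - c0 := by
      rw [hc0def]; unfold resid; abel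
    rw [hres]
    have hball := Metric.mem_ball.1 hp
    rw [dist_eq_norm] at hball
    linarith
  -- the invariant
  have hInv : ∀ k, N ≤ k → ‖resid α ρ h p (digitsD α ρ h p N k)‖ ≤ α^k/2 := by
    intro k hk
    induction k, hk using Nat.le_induction with
    | base => exact hYbase
    | succ k hk ih =>
      set w : List (Fin 4) := digitsD α ρ h p N k with hwdef
      set Y : ℝ × ℝ := resid α ρ h p w with hYdef
      have hlen : w.length = k := length_digitsD α ρ h p N k
      have hcons : digitsD α ρ h p N (k+1) = aD α ρ h p N k :: w := digitsD_succ α ρ h p N k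
      have hxval : xval α (digitsD α ρ h p N (k+1)) =
          xval α w + (α^k/4) • travRev w (aD α ρ h p N k) := by
        rw [hcons]
        show xval α w + (α ^ w.length / 4) • travRev w _ = _
        rw [hlen]
      have hcorner : travRev w (aD α ρ h p N k) = (sgn Y.1, sgn Y.2) :=
        choice_spec α ρ h p N k hk
      set δ : ℝ := ((1-ρ)/(3*ρ))*((aD α ρ h p N k : ℝ)*ρ^(k+1)) with hδdef
      have htau : tauL ρ (digitsD α ρ h p N (k+1)) = tauL ρ w + δ := by
        rw [hcons, tauL_cons hρ0 hρ1', hlen, hδdef]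
      have hδ0 : 0 ≤ δ := by
        rw [hδdef]
        have := tauL_cons_diff_nonneg (ρ := ρ) hρ0 hρ1' (aD α ρ h p N k) w
        rwa [hlen] at this
      have hδle : δ ≤ ρ^k := by rw [hδdef]; exact coeff_mul_le hρ0 hρ1' _ k
      have hτ0 : 0 ≤ tauL ρ w := (tauL_mem hρ0 hρ1' w).1
      have hτ1 : tauL ρ w + δ ≤ 1 := by
        rw [← htau]; exact (tauL_mem hρ0 hρ1' _).2
      have hherr : ‖h (tauL ρ w + δ) - h (tauL ρ w)‖ ≤ β*α^k :=
        keyE k hk δ hδ0 hδle _ hτ0 hτ1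
      have hYsucc : resid α ρ h p (digitsD α ρ h p N (k+1)) =
          (Y - (α^k/4) • ((sgn Y.1 : ℝ), sgn Y.2)) + (h (tauL ρ w) - h (tauL ρ w + δ)) := by
        show p - h (tauL ρ (digitsD α ρ h p N (k+1))) - xval α (digitsD α ρ h p N (k+1)) = _
        rw [hxval, hcorner, htau, hYdef]
        show _ = (p - h (tauL ρ w) - xval α w - _) + _
        abel
      rw [hYsucc]
      have hb1 : ‖Y - (α^k/4) • ((sgn Y.1 : ℝ), sgn Y.2)‖ ≤ α^k/4 := by
        rw [norm_prod_le_iff]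
        have hb : (0:ℝ) < α^k/4 := by positivity
        have hY1 : |Y.1| ≤ 2*(α^k/4) := by
          have h1 : ‖Y.1‖ ≤ ‖Y‖ := by rw [Prod.norm_def]; exact le_max_left _ _
          rw [Real.norm_eq_abs] at h1
          calc |Y.1| ≤ ‖Y‖ := h1
            _ ≤ α^k/2 := ih
            _ = 2*(α^k/4) := by ring
        have hY2 : |Y.2| ≤ 2*(α^k/4) := by
          have h1 : ‖Y.2‖ ≤ ‖Y‖ := by rw [Prod.norm_def]; exact le_max_right _ _
          rw [Real.norm_eq_abs] at h1
          calc |Y.2| ≤ ‖Y‖ := h1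
            _ ≤ α^k/2 := ih
            _ = 2*(α^k/4) := by ring
        constructor
        · show ‖(Y - (α^k/4) • ((sgn Y.1 : ℝ), sgn Y.2)).1‖ ≤ _
          simp only [Prod.fst_sub, Prod.smul_fst, smul_eq_mul]
          rw [Real.norm_eq_abs]
          exact abs_sub_sgn Y.1 (α^k/4) hb hY1
        · show ‖(Y - (α^k/4) • ((sgn Y.1 : ℝ), sgn Y.2)).2‖ ≤ _
          simp only [Prod.snd_sub, Prod.smul_snd, smul_eq_mul]
          rw [Real.norm_eq_abs]
          exact abs_sub_sgn Y.2 (α^k/4) hb hY2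
      calc ‖_ + (h (tauL ρ w) - h (tauL ρ w + δ))‖
          ≤ ‖Y - (α^k/4) • ((sgn Y.1 : ℝ), sgn Y.2)‖ + ‖h (tauL ρ w) - h (tauL ρ w + δ)‖ :=
            norm_add_le _ _
        _ ≤ α^k/4 + β*α^k := by
            refine add_le_add hb1 ?_
            rw [norm_sub_rev]; exact hherr
        _ = α^(k+1)/2 := by rw [hβdef]; ring
  -- passing to the limit
  set a : ℕ → Fin 4 := aD α ρ h p N with hadef
  set t : ℝ := cantorPt ρ a with htdef
  have htmem : t ∈ Icc (0:ℝ) 1 := ⟨cantorPt_nonneg hρ0 hρ1' a, cantorPt_le_one hρ0 hρ1' a⟩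
  have hβα : Filter.Tendsto (fun k : ℕ => β*α^k) Filter.atTop (nhds 0) := by
    have := (tendsto_pow_atTop_nhds_zero_of_lt_one hα0.le hα2).const_mul β
    simpa using this
  have hhtend : Filter.Tendsto (fun k => h (tauL ρ (digitsD α ρ h p N k)))
      Filter.atTop (nhds (h t)) := by
    rw [← tendsto_sub_nhds_zero_iff]
    apply squeeze_zero_norm' _ hβα
    rw [Filter.eventually_atTop]
    refine ⟨N, fun k hk => ?_⟩
    obtain ⟨hd0, hd1⟩ := cantor_sub_tau h p N hρ0 hρ1' α k
    have hkey := keyE k hk (t - tauL ρ (digitsD α ρ h p N k)) hd0 hd1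
      (tauL ρ (digitsD α ρ h p N k)) (tauL_mem hρ0 hρ1' _).1
      (by rw [htdef]; ring_nf; exact htmem.2)
    have heq : tauL ρ (digitsD α ρ h p N k) + (t - tauL ρ (digitsD α ρ h p N k)) = t := by
      ring
    rw [heq] at hkey
    rwa [norm_sub_rev]
  have hYtend : Filter.Tendsto (fun k => resid α ρ h p (digitsD α ρ h p N k))
      Filter.atTop (nhds 0) := by
    apply squeeze_zero_norm' _ (show Filter.Tendsto (fun k : ℕ => α^k/2) Filter.atTop (nhds 0) by
      have := (tendsto_pow_atTop_nhds_zero_of_lt_one hα0.le hα2).div_const 2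
      simpa using this)
    exact Filter.eventually_atTop.2 ⟨N, hInv⟩
  have hxtend2 : Filter.Tendsto (fun k => xval α (digitsD α ρ h p N k))
      Filter.atTop (nhds (p - h t)) := by
    have hpt : ∀ k, xval α (digitsD α ρ h p N k) =
        p - h (tauL ρ (digitsD α ρ h p N k)) - resid α ρ h p (digitsD α ρ h p N k) := by
      intro k
      show _ = p - h (tauL ρ (digitsD α ρ h p N k)) -
        (p - h (tauL ρ (digitsD α ρ h p N k)) - xval α (digitsD α ρ h p N k))
      abel
    have hc : Filter.Tendsto (fun _ : ℕ => p) Filter.atTop (nhds p) := tendsto_const_nhds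
    have := (hc.sub hhtend).sub hYtend
    simp only [sub_zero] at this
    exact this.congr (fun k => (hpt k).symm)
  have hxtend1 := xval_tendsto α ρ h p N hα0 hα2
  have hGH : GHlim α a = p - h t := tendsto_nhds_unique hxtend1 hxtend2
  refine ⟨t, htmem, ?_⟩
  show G t + h t = p
  rw [htdef, hGval a, ← htdef, hGH]
  abel
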